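/- The 6×6 transfer matrix M with rows (0,2,0,0,0,1), (2,0,1,1,0,0), (1,0,1,2,1,0), (1,0,2,1,1,0), (0,2,0,0,0,2), (0,0,2,2,2,0) has characteristic polynomial divisible by x³ − 4x² − 4x + 8, and its spectral radius is the largest real root B of x³ − 4x² − 4x + 8. -/

import Mathlib

open Matrix Polynomial

/-- The transfer matrix for Type 4 Hamilton cycles in the width-6 nanotubes `N(6,k)`. -/
def transferMatrix6 : Matrix (Fin 6) (Fin 6) ℤ :=
  !![0, 2, 0, 0, 0, 1;
     2, 0, 1, 1, 0, 0;
     1, 0, 1, 2, 1, 0;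
     1, 0, 2, 1, 1, 0;
     0, 2, 0, 0, 0, 2;
     0, 0, 2, 2, 2, 0]

set_option maxHeartbeats 12000000 in
set_option maxRecDepth 20000 in
private theorem tm6_charpoly_eq : transferMatrix6.charpoly
    = (X ^ 3 - 4 * X ^ 2 - 4 * X + 8) * (X ^ 3 + 2 * X ^ 2 + X) := by
  rw [Matrix.charpoly]
  simp [charmatrix, transferMatrix6, Matrix.det_succ_row_zero, Fin.sum_univ_succ, map_ofNat,
    Polynomial.C_0, Polynomial.C_1]
  norm_num [Matrix.diagonal_apply, Fin.succAbove, Fin.succ, Fin.lt_def, Fin.ext_iff,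
    Matrix.cons_val_succ, Matrix.cons_val, Fin.val_zero, Fin.val_one,
    show Fin.castSucc (0:Fin 2) = (0:Fin 3) from rfl, show Fin.castSucc (1:Fin 2) = (1:Fin 3) from rfl,
    show Fin.castSucc (0:Fin 3) = (0:Fin 4) from rfl, show Fin.castSucc (1:Fin 3) = (1:Fin 4) from rfl,
    show Fin.castSucc (2:Fin 3) = (2:Fin 4) from rfl,
    show Fin.castSucc (0:Fin 4) = (0:Fin 5) from rfl, show Fin.castSucc (1:Fin 4) = (1:Fin 5) from rfl,
    show Fin.castSucc (2:Fin 4) = (2:Fin 5) from rfl, show Fin.castSucc (3:Fin 4) = (3:Fin 5) from rfl,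
    show Fin.castSucc (0:Fin 5) = (0:Fin 6) from rfl, show Fin.castSucc (1:Fin 5) = (1:Fin 6) from rfl,
    show Fin.castSucc (2:Fin 5) = (2:Fin 6) from rfl, show Fin.castSucc (3:Fin 5) = (3:Fin 6) from rfl,
    show Fin.castSucc (4:Fin 5) = (4:Fin 6) from rfl]
  norm_num [Matrix.cons_val_two, Matrix.cons_val_three, Matrix.cons_val_four, Matrix.vecHead, Matrix.vecTail, Function.comp, Fin.succ_zero_eq_one, Fin.succ_one_eq_two]
  ring1

private lemma tm6_mem_spec_iff (A : Matrix (Fin 6) (Fin 6) ℂ) (z : ℂ) :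
    z ∈ spectrum ℂ A ↔ A.charpoly.eval z = 0 := by
  rw [spectrum.mem_iff, Matrix.charpoly, _root_.eval_det, matPolyEquiv_charmatrix,
    eval_sub, eval_X, eval_C]
  rw [Matrix.isUnit_iff_isUnit_det, isUnit_iff_ne_zero, not_not]
  constructor
  · intro h; rw [← h]; congr 1
  · intro h; rw [← h]; congr 1

private lemma tm6_charpolyC : (transferMatrix6.map (Int.cast : ℤ → ℂ)).charpoly
    = (X ^ 3 - 4 * X ^ 2 - 4 * X + 8) * (X ^ 3 + 2 * X ^ 2 + X) := by
  have h : (Int.cast : ℤ → ℂ) = (Int.castRingHom ℂ : ℤ → ℂ) := rfl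
  rw [h, Matrix.charpoly_map, tm6_charpoly_eq]
  simp [Polynomial.map_mul, Polynomial.map_add, Polynomial.map_sub, Polynomial.map_pow,
    Polynomial.map_ofNat]

private lemma tm6_spec_iff (z : ℂ) : z ∈ spectrum ℂ (transferMatrix6.map (Int.cast : ℤ → ℂ)) ↔
    (z ^ 3 - 4 * z ^ 2 - 4 * z + 8) * (z * (z + 1) ^ 2) = 0 := by
  rw [tm6_mem_spec_iff, tm6_charpolyC]
  constructor <;> intro h <;> (rw [← h]; ring_nf) <;> simp

private lemma tm6_exists_root_Icc {lo hi : ℝ} (hle : lo ≤ hi)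
    (h1 : lo ^ 3 - 4 * lo ^ 2 - 4 * lo + 8 ≤ 0) (h2 : 0 ≤ hi ^ 3 - 4 * hi ^ 2 - 4 * hi + 8) :
    ∃ x ∈ Set.Icc lo hi, x ^ 3 - 4 * x ^ 2 - 4 * x + 8 = 0 := by
  have hc : ContinuousOn (fun x : ℝ => x ^ 3 - 4 * x ^ 2 - 4 * x + 8) (Set.Icc lo hi) := by
    fun_prop
  obtain ⟨x, hx, hfx⟩ := intermediate_value_Icc hle hc ⟨h1, h2⟩
  exact ⟨x, hx, hfx⟩

private lemma tm6_exists_root_Icc' {lo hi : ℝ} (hle : lo ≤ hi)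
    (h1 : 0 ≤ lo ^ 3 - 4 * lo ^ 2 - 4 * lo + 8) (h2 : hi ^ 3 - 4 * hi ^ 2 - 4 * hi + 8 ≤ 0) :
    ∃ x ∈ Set.Icc lo hi, x ^ 3 - 4 * x ^ 2 - 4 * x + 8 = 0 := by
  have hc : ContinuousOn (fun x : ℝ => x ^ 3 - 4 * x ^ 2 - 4 * x + 8) (Set.Icc lo hi) := by
    fun_prop
  obtain ⟨x, hx, hfx⟩ := intermediate_value_Icc' hle hc ⟨h2, h1⟩
  exact ⟨x, hx, hfx⟩

/-- The characteristic polynomial of the width-6 transfer matrix is divisible by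
`x³ − 4x² − 4x + 8`, and its spectral radius is the largest real root `B` of this cubic. -/
theorem transferMatrix6_charpoly_and_spectralRadius :
    ((X ^ 3 - 4 * X ^ 2 - 4 * X + 8 : ℤ[X]) ∣ transferMatrix6.charpoly) ∧
    ∃ B : ℝ,
      (B ^ 3 - 4 * B ^ 2 - 4 * B + 8 = 0 ∧
        ∀ x : ℝ, x ^ 3 - 4 * x ^ 2 - 4 * x + 8 = 0 → x ≤ B) ∧
      ((B : ℂ) ∈ spectrum ℂ (transferMatrix6.map (Int.cast : ℤ → ℂ)) ∧
        ∀ z ∈ spectrum ℂ (transferMatrix6.map (Int.cast : ℤ → ℂ)), ‖z‖ ≤ B) := by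
  obtain ⟨a, ha, ha0⟩ := tm6_exists_root_Icc (by norm_num : (-2:ℝ) ≤ -1) (by norm_num) (by norm_num)
  obtain ⟨b, hb, hb0⟩ := tm6_exists_root_Icc' (by norm_num : (1:ℝ) ≤ 2) (by norm_num) (by norm_num)
  obtain ⟨B, hB, hB0⟩ := tm6_exists_root_Icc (by norm_num : (4:ℝ) ≤ 5) (by norm_num) (by norm_num)
  have hab : a ^ 2 + a * b + b ^ 2 - 4 * a - 4 * b - 4 = 0 := by
    have hne : a - b ≠ 0 := by nlinarith [ha.2, hb.1]
    have h : (a - b) * (a ^ 2 + a * b + b ^ 2 - 4 * a - 4 * b - 4) = 0 := by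
      linear_combination ha0 - hb0
    exact (mul_eq_zero.1 h).resolve_left hne
  have haB : a ^ 2 + a * B + B ^ 2 - 4 * a - 4 * B - 4 = 0 := by
    have hne : a - B ≠ 0 := by nlinarith [ha.2, hB.1]
    have h : (a - B) * (a ^ 2 + a * B + B ^ 2 - 4 * a - 4 * B - 4) = 0 := by
      linear_combination ha0 - hB0
    exact (mul_eq_zero.1 h).resolve_left hne
  have s1 : a + b + B - 4 = 0 := by
    have hne : b - B ≠ 0 := by nlinarith [hb.2, hB.1]
    have h : (b - B) * (a + b + B - 4) = 0 := by linear_combination hab - haB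
    exact (mul_eq_zero.1 h).resolve_left hne
  have s2 : a * b + a * B + b * B + 4 = 0 := by
    linear_combination (-1 : ℝ) * hab + (a + b) * s1
  have s3 : a * b * B + 8 = 0 := by
    linear_combination B * s2 - B ^ 2 * s1 + hB0
  refine ⟨⟨X ^ 3 + 2 * X ^ 2 + X, tm6_charpoly_eq⟩, B, ⟨hB0, ?_⟩, ?_, ?_⟩
  · intro x hx0
    by_contra hcon
    push_neg at hcon
    have h1 : 0 < x - B := sub_pos.2 hcon
    have h2 : 0 < x ^ 2 + x * B + B ^ 2 - 4 * x - 4 * B - 4 := by nlinarith [hB.1]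
    nlinarith [mul_pos h1 h2]
  · rw [tm6_spec_iff]
    have h : ((B : ℂ) ^ 3 - 4 * (B : ℂ) ^ 2 - 4 * (B : ℂ) + 8) = 0 := by
      exact_mod_cast congrArg (fun t : ℝ => (t : ℂ)) hB0
    rw [h, zero_mul]
  · intro z hz
    rw [tm6_spec_iff] at hz
    have hB4 : (4 : ℝ) ≤ B := hB.1
    rcases mul_eq_zero.1 hz with h | h
    · have c1 : (a : ℂ) + b + B - 4 = 0 := by exact_mod_cast congrArg (fun t : ℝ => (t : ℂ)) s1
      have c2 : (a : ℂ) * b + a * B + b * B + 4 = 0 := by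
        exact_mod_cast congrArg (fun t : ℝ => (t : ℂ)) s2
      have c3 : (a : ℂ) * b * B + 8 = 0 := by
        exact_mod_cast congrArg (fun t : ℝ => (t : ℂ)) s3
      have key : (z - (a : ℂ)) * (z - (b : ℂ)) * (z - (B : ℂ)) = 0 := by
        linear_combination h - z ^ 2 * c1 + z * c2 - c3
      rcases mul_eq_zero.1 key with h' | h'
      · rcases mul_eq_zero.1 h' with h'' | h''
        · have hz' : z = (a : ℂ) := sub_eq_zero.1 h''
          rw [hz', Complex.norm_real]
          have : |a| ≤ 2 := abs_le.2 ⟨ha.1, le_trans ha.2 (by norm_num)⟩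
          calc ‖a‖ = |a| := rfl
            _ ≤ 2 := this
            _ ≤ B := by linarith
        · have hz' : z = (b : ℂ) := sub_eq_zero.1 h''
          rw [hz', Complex.norm_real]
          have : |b| ≤ 2 := abs_le.2 ⟨le_trans (by norm_num) hb.1, hb.2⟩
          calc ‖b‖ = |b| := rfl
            _ ≤ 2 := this
            _ ≤ B := by linarith
      · have hz' : z = (B : ℂ) := sub_eq_zero.1 h'
        rw [hz', Complex.norm_real]
        calc ‖B‖ = |B| := rfl
          _ ≤ B := by rw [abs_of_nonneg (by linarith)]
    · rcases mul_eq_zero.1 h with h' | h'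
      · rw [h', norm_zero]; linarith
      · have hz' : z = -1 := by
          have h2 := pow_eq_zero_iff (n := 2) (by norm_num) |>.1 h'
          exact eq_neg_of_add_eq_zero_left h2
        rw [hz']
        simp only [norm_neg, norm_one]
        linarith
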